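/- Let n ≥ 1, K ≥ 1, and ρ ∈ (0, 1/2]. Let G(1), …, G(K) be communication graphs on n nodes whose product G(1) ∘ G(2) ∘ ⋯ ∘ G(K) is nonsplit, and let x(0), x(1), …, x(K) ∈ ℝ^n be such that for each 1 ≤ k ≤ K, x(k) is a ρ-safe update of x(k−1) along G(k). Then δ(x(K)) ≤ (1 − ρ^K)·δ(x(0)). (In a K-nonsplit network model, a ρ-safe averaging algorithm is (1−ρ^K)-contracting over each block of K consecutive rounds.) -/

import Mathlib

/-- `δ(x) = max_p x_p − min_p x_p`. -/
noncomputable def delta {n : ℕ} (x : Fin n → ℝ) : ℝ :=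
  sSup (Set.range x) - sInf (Set.range x)

/-- A communication graph is nonsplit if any two nodes have a common incoming neighbor. -/
def Nonsplit {n : ℕ} (E : Fin n → Fin n → Prop) : Prop :=
  ∀ p q, ∃ r, E r p ∧ E r q

/-- `ProdSeg G a m` is the product `G (a+1) ∘ G (a+2) ∘ ⋯ ∘ G (a+m)`, where the product
`G ∘ H` has an edge `(p,q)` iff there is `r` with `(p,r) ∈ G` and `(r,q) ∈ H`;
the empty product is the identity graph. -/
def ProdSeg {n : ℕ} (G : ℕ → Fin n → Fin n → Prop) (a : ℕ) : ℕ → Fin n → Fin n → Prop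
  | 0 => fun p q => p = q
  | m + 1 => fun p q => ∃ r, ProdSeg G a m p r ∧ G (a + m + 1) r q

/-- `x'` is a ρ-safe update of `x` along the graph `E`. -/
def SafeUpdate {n : ℕ} (ρ : ℝ) (E : Fin n → Fin n → Prop) (x x' : Fin n → ℝ) : Prop :=
  ∀ p, ρ * sSup (x '' {q | E q p}) + (1 - ρ) * sInf (x '' {q | E q p}) ≤ x' p ∧
       x' p ≤ (1 - ρ) * sSup (x '' {q | E q p}) + ρ * sInf (x '' {q | E q p})

theorem K_nonsplit_contraction
    (n K : ℕ) (hn : 1 ≤ n) (hK : 1 ≤ K) (ρ : ℝ) (hρ0 : 0 < ρ) (hρ2 : ρ ≤ 1 / 2)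
    (G : ℕ → Fin n → Fin n → Prop)
    (hrefl : ∀ k, 1 ≤ k → k ≤ K → ∀ p, G k p p)
    -- the product `G 1 ∘ G 2 ∘ ⋯ ∘ G K` is nonsplit
    (hns : Nonsplit (ProdSeg G 0 K))
    (x : ℕ → Fin n → ℝ)
    (hupd : ∀ k, 1 ≤ k → k ≤ K → SafeUpdate ρ (G k) (x (k - 1)) (x k)) :
    delta (x K) ≤ (1 - ρ ^ K) * delta (x 0) := by

  have hne : Nonempty (Fin n) := ⟨⟨0, hn⟩⟩
  have hρ1 : ρ ≤ 1 := by linarith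
  set M := sSup (Set.range (x 0)) with hM
  set m := sInf (Set.range (x 0)) with hm
  -- global bounds
  have hbd : ∀ k, k ≤ K → ∀ p, m ≤ x k p ∧ x k p ≤ M := by
    intro k
    induction k with
    | zero =>
      intro _ p
      exact ⟨csInf_le (Set.Finite.bddBelow (Set.toFinite _)) ⟨p, rfl⟩,
             le_csSup (Set.Finite.bddAbove (Set.toFinite _)) ⟨p, rfl⟩⟩
    | succ k ih =>
      intro hk p
      have hk' : k ≤ K := by omega
      have ih' := ih hk'
      have hu := hupd (k+1) (by omega) hk p
      simp only [Nat.add_sub_cancel] at hu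
      set S := sSup (x k '' {q | G (k+1) q p}) with hS
      set I := sInf (x k '' {q | G (k+1) q p}) with hI
      have hnonemp : (x k '' {q | G (k+1) q p}).Nonempty :=
        ⟨x k p, p, hrefl (k+1) (by omega) hk p, rfl⟩
      have hSM : S ≤ M := csSup_le hnonemp (by rintro _ ⟨q, _, rfl⟩; exact (ih' q).2)
      have hmI : m ≤ I := le_csInf hnonemp (by rintro _ ⟨q, _, rfl⟩; exact (ih' q).1)
      have hIS : I ≤ S := csInf_le_csSup hnonemp (Set.Finite.bddBelow (Set.toFinite _))
        (Set.Finite.bddAbove (Set.toFinite _))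
      constructor
      · nlinarith [hu.1]
      · nlinarith [hu.2]
  -- upper tracking
  have htrack_up : ∀ k, k ≤ K → ∀ r p, ProdSeg G 0 k r p →
      x k p ≤ ρ ^ k * x 0 r + (1 - ρ ^ k) * M := by
    intro k
    induction k with
    | zero =>
      intro _ r p hpr
      have : r = p := hpr
      subst this
      simp
    | succ k ih =>
      intro hk r p hpr
      obtain ⟨s, hrs, hsp⟩ := hpr
      have hsp' : G (k+1) s p := by simpa using hsp
      have hk' : k ≤ K := by omega
      have hu := (hupd (k+1) (by omega) hk p).2
      simp only [Nat.add_sub_cancel] at hu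
      set S := sSup (x k '' {q | G (k+1) q p}) with hS
      set I := sInf (x k '' {q | G (k+1) q p}) with hI
      have hnonemp : (x k '' {q | G (k+1) q p}).Nonempty :=
        ⟨x k p, p, hrefl (k+1) (by omega) hk p, rfl⟩
      have hSM : S ≤ M := csSup_le hnonemp (by rintro _ ⟨q, _, rfl⟩; exact (hbd k hk' q).2)
      have hIs : I ≤ x k s := csInf_le (Set.Finite.bddBelow (Set.toFinite _)) ⟨s, hsp', rfl⟩
      have hrec := ih hk' r s hrs
      have hpow : (0:ℝ) ≤ ρ ^ k := pow_nonneg hρ0.le k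
      have hps : ρ ^ (k+1) = ρ * ρ ^ k := by ring
      calc x (k+1) p ≤ (1 - ρ) * S + ρ * I := hu
        _ ≤ (1 - ρ) * M + ρ * x k s :=
          add_le_add (mul_le_mul_of_nonneg_left hSM (by linarith))
            (mul_le_mul_of_nonneg_left hIs hρ0.le)
        _ ≤ (1 - ρ) * M + ρ * (ρ ^ k * x 0 r + (1 - ρ ^ k) * M) := by
          have := mul_le_mul_of_nonneg_left hrec hρ0.le; linarith
        _ = ρ ^ (k+1) * x 0 r + (1 - ρ ^ (k+1)) * M := by ring
  -- lower tracking
  have htrack_lo : ∀ k, k ≤ K → ∀ r p, ProdSeg G 0 k r p →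
      ρ ^ k * x 0 r + (1 - ρ ^ k) * m ≤ x k p := by
    intro k
    induction k with
    | zero =>
      intro _ r p hpr
      have : r = p := hpr
      subst this
      simp
    | succ k ih =>
      intro hk r p hpr
      obtain ⟨s, hrs, hsp⟩ := hpr
      have hsp' : G (k+1) s p := by simpa using hsp
      have hk' : k ≤ K := by omega
      have hu := (hupd (k+1) (by omega) hk p).1
      simp only [Nat.add_sub_cancel] at hu
      set S := sSup (x k '' {q | G (k+1) q p}) with hS
      set I := sInf (x k '' {q | G (k+1) q p}) with hI
      have hnonemp : (x k '' {q | G (k+1) q p}).Nonempty :=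
        ⟨x k p, p, hrefl (k+1) (by omega) hk p, rfl⟩
      have hmI : m ≤ I := le_csInf hnonemp (by rintro _ ⟨q, _, rfl⟩; exact (hbd k hk' q).1)
      have hsS : x k s ≤ S := le_csSup (Set.Finite.bddAbove (Set.toFinite _)) ⟨s, hsp', rfl⟩
      have hrec := ih hk' r s hrs
      have hpow : (0:ℝ) ≤ ρ ^ k := pow_nonneg hρ0.le k
      have hps : ρ ^ (k+1) = ρ * ρ ^ k := by ring
      calc ρ ^ (k+1) * x 0 r + (1 - ρ ^ (k+1)) * m
          = ρ * (ρ ^ k * x 0 r + (1 - ρ ^ k) * m) + (1 - ρ) * m := by ring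
        _ ≤ ρ * x k s + (1 - ρ) * m := by
          have := mul_le_mul_of_nonneg_left hrec hρ0.le; linarith
        _ ≤ ρ * S + (1 - ρ) * I :=
          add_le_add (mul_le_mul_of_nonneg_left hsS hρ0.le)
            (mul_le_mul_of_nonneg_left hmI (by linarith))
        _ ≤ x (k+1) p := hu
  -- conclude
  obtain ⟨p, hp⟩ := (Set.range_nonempty (x K)).csSup_mem (Set.finite_range _)
  obtain ⟨q, hq⟩ := (Set.range_nonempty (x K)).csInf_mem (Set.finite_range _)
  obtain ⟨r, hrp, hrq⟩ := hns p q
  have hup := htrack_up K le_rfl r p hrp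
  have hlo := htrack_lo K le_rfl r q hrq
  simp only [delta, ← hM, ← hm, ← hp, ← hq]
  nlinarith [hup, hlo]
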